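/- For every natural number m and all real numbers x and z, the coefficient of t^m in the formal power series (1+t)^x / (1 + t(z+1)) equals Σ_{n=0}^{m} (-1)^n · C(y+n(z+1), n) · C(x+y+nz, m-n) for every real y; in particular this sum is independent of y. -/

import Mathlib

open Finset PowerSeries

/-- Generalized binomial coefficient `C(x, k) = x(x-1)⋯(x-k+1)/k!` for real `x`. -/
noncomputable def gchoose (x : ℝ) (k : ℕ) : ℝ :=
  (∏ i ∈ Finset.range k, (x - i)) / (Nat.factorial k)

/-- The binomial series `(1+t)^x = Σ C(x,k) t^k` as a formal power series. -/
noncomputable def binomSeries (x : ℝ) : PowerSeries ℝ :=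
  PowerSeries.mk fun k => gchoose x k

/-! ### Auxiliary development -/

lemma gchoose_zero (x : ℝ) : gchoose x 0 = 1 := by simp [gchoose]

lemma fact_ne (k : ℕ) : ((Nat.factorial k : ℝ)) ≠ 0 := by
  exact_mod_cast (Nat.factorial_ne_zero k)

lemma div_fact_succ_add (a b : ℝ) (n : ℕ) :
    a / ((Nat.factorial (n + 1) : ℝ)) + b / ((Nat.factorial n : ℝ))
      = (a + ((n : ℝ) + 1) * b) / ((Nat.factorial (n + 1) : ℝ)) := by
  have hF : ((Nat.factorial n : ℝ)) ≠ 0 := fact_ne n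
  have hc : ((n : ℝ) + 1) ≠ 0 := by positivity
  have hfac : ((Nat.factorial (n + 1) : ℝ)) = ((n : ℝ) + 1) * (Nat.factorial n : ℝ) := by
    rw [Nat.factorial_succ]; push_cast; ring
  rw [hfac, div_add_div _ _ (mul_ne_zero hc hF) hF,
    div_eq_div_iff (mul_ne_zero (mul_ne_zero hc hF) hF) (mul_ne_zero hc hF)]
  ring

/-- Pascal's rule for the generalized binomial coefficient. -/
lemma gchoose_pascal (c : ℝ) (k : ℕ) :
    gchoose (c + 1) (k + 1) = gchoose c (k + 1) + gchoose c k := by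
  simp only [gchoose]
  rw [div_fact_succ_add]
  congr 1
  have h1 : ∏ i ∈ Finset.range (k + 1), (c + 1 - (i : ℝ))
      = (∏ i ∈ Finset.range k, (c - (i : ℝ))) * (c + 1) := by
    rw [Finset.prod_range_succ']
    congr 1
    · exact Finset.prod_congr rfl fun i _ => by push_cast; ring
    · norm_num
  have h2 : ∏ i ∈ Finset.range (k + 1), (c - (i : ℝ))
      = (∏ i ∈ Finset.range k, (c - (i : ℝ))) * (c - k) := Finset.prod_range_succ _ _
  rw [h1, h2]
  ring

lemma gchoose_pascal_sub (c : ℝ) (k : ℕ) :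
    gchoose (c + 1) (k + 1) - gchoose c (k + 1) = gchoose c k := by
  rw [gchoose_pascal]; ring

/-- Rothe's weighted binomial coefficient `y/(y+n(z+1)) · C(y+n(z+1), n)`. -/
noncomputable def aw (z y : ℝ) : ℕ → ℝ
  | 0 => 1
  | n + 1 => y * (∏ i ∈ Finset.range n, (y + (((n : ℝ) + 1) * (z + 1) - ((i : ℝ) + 1))))
      / (Nat.factorial (n + 1))

lemma aw_zero (z y : ℝ) : aw z y 0 = 1 := rfl

lemma aw_zero_left (z : ℝ) (n : ℕ) : aw z 0 (n + 1) = 0 := by simp [aw]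

/-- Splitting the binomial coefficient into Rothe's weight plus a shifted coefficient. -/
lemma gchoose_split (z y : ℝ) (n : ℕ) :
    gchoose (y + ((n : ℝ) + 1) * (z + 1)) (n + 1)
      = aw z y (n + 1) + (z + 1) * gchoose ((y + z) + (n : ℝ) * (z + 1)) n := by
  simp only [gchoose, aw]
  rw [← mul_div_assoc, div_fact_succ_add]
  congr 1
  have hQ : ∏ i ∈ Finset.range n, (y + z + (n : ℝ) * (z + 1) - (i : ℝ))
      = ∏ i ∈ Finset.range n, (y + (((n : ℝ) + 1) * (z + 1) - ((i : ℝ) + 1))) :=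
    Finset.prod_congr rfl fun i _ => by ring
  have hL : ∏ i ∈ Finset.range (n + 1), (y + ((n : ℝ) + 1) * (z + 1) - (i : ℝ))
      = (∏ i ∈ Finset.range n, (y + (((n : ℝ) + 1) * (z + 1) - ((i : ℝ) + 1))))
        * (y + ((n : ℝ) + 1) * (z + 1)) := by
    rw [Finset.prod_range_succ']
    congr 1
    · exact Finset.prod_congr rfl fun i _ => by push_cast; ring
    · norm_num
  rw [hL, hQ]
  ring

/-- The recurrence for the weighted coefficients. -/
lemma aw_step (z y : ℝ) (n : ℕ) :
    aw z (y + 1) (n + 1) = aw z y (n + 1) + aw z (y + z + 1) n := by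
  cases n with
  | zero => simp [aw]
  | succ m =>
    simp only [aw]
    have h1 : ∏ i ∈ Finset.range (m + 1),
          (y + 1 + ((((m + 1 : ℕ) : ℝ) + 1) * (z + 1) - ((i : ℝ) + 1)))
        = (∏ i ∈ Finset.range m, (y + (((m : ℝ) + 2) * (z + 1) - ((i : ℝ) + 1))))
          * (y + ((m : ℝ) + 2) * (z + 1)) := by
      rw [Finset.prod_range_succ']
      congr 1
      · exact Finset.prod_congr rfl fun i _ => by push_cast; ring
      · push_cast; ring
    have h2 : ∏ i ∈ Finset.range (m + 1),
          (y + ((((m + 1 : ℕ) : ℝ) + 1) * (z + 1) - ((i : ℝ) + 1)))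
        = (∏ i ∈ Finset.range m, (y + (((m : ℝ) + 2) * (z + 1) - ((i : ℝ) + 1))))
          * (y + ((m : ℝ) + 2) * (z + 1) - ((m : ℝ) + 1)) := by
      rw [Finset.prod_range_succ]
      congr 1
      · exact Finset.prod_congr rfl fun i _ => by push_cast; ring
      · push_cast; ring
    have h3 : ∏ i ∈ Finset.range m,
          (y + z + 1 + ((((m : ℕ) : ℝ) + 1) * (z + 1) - ((i : ℝ) + 1)))
        = ∏ i ∈ Finset.range m, (y + (((m : ℝ) + 2) * (z + 1) - ((i : ℝ) + 1))) :=
      Finset.prod_congr rfl fun i _ => by ring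
    rw [h1, h2, h3, div_fact_succ_add]
    congr 1
    push_cast
    ring

/-- The weighted alternating sum. -/
noncomputable def Wsum (z x y : ℝ) (M : ℕ) : ℝ :=
  ∑ n ∈ Finset.range (M + 1),
    (-1 : ℝ) ^ n * aw z y n * gchoose (x + y + n * z) (M - n)

/-- The main alternating sum. -/
noncomputable def Ssum (z x y : ℝ) (M : ℕ) : ℝ :=
  ∑ n ∈ Finset.range (M + 1),
    (-1 : ℝ) ^ n * gchoose (y + n * (z + 1)) n * gchoose (x + y + n * z) (M - n)

/-- polynomial representing `y ↦ gchoose (y + c) k`. -/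
noncomputable def gcPoly (c : ℝ) (k : ℕ) : Polynomial ℝ :=
  Polynomial.C ((Nat.factorial k : ℝ))⁻¹
    * ∏ i ∈ Finset.range k, (Polynomial.X + Polynomial.C (c - i))

lemma gcPoly_eval (c y : ℝ) (k : ℕ) : (gcPoly c k).eval y = gchoose (y + c) k := by
  simp only [gcPoly, gchoose, Polynomial.eval_mul, Polynomial.eval_C, Polynomial.eval_prod,
    Polynomial.eval_add, Polynomial.eval_X]
  rw [div_eq_inv_mul]
  congr 1
  exact Finset.prod_congr rfl fun i _ => by ring

/-- polynomial representing `y ↦ aw z y n`. -/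
noncomputable def awPoly (z : ℝ) : ℕ → Polynomial ℝ
  | 0 => 1
  | n + 1 => Polynomial.C ((Nat.factorial (n + 1) : ℝ))⁻¹
      * (Polynomial.X * ∏ i ∈ Finset.range n,
          (Polynomial.X + Polynomial.C (((n : ℝ) + 1) * (z + 1) - ((i : ℝ) + 1))))

lemma awPoly_eval (z y : ℝ) (n : ℕ) : (awPoly z n).eval y = aw z y n := by
  cases n with
  | zero => simp [awPoly, aw]
  | succ m =>
    simp only [awPoly, aw, Polynomial.eval_mul, Polynomial.eval_C, Polynomial.eval_prod,
      Polynomial.eval_add, Polynomial.eval_X]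
    rw [div_eq_inv_mul]

lemma Wsum_poly (z x : ℝ) (M : ℕ) :
    ∃ p : Polynomial ℝ, ∀ y, p.eval y = Wsum z x y M := by
  refine ⟨∑ n ∈ Finset.range (M + 1),
    Polynomial.C ((-1 : ℝ) ^ n) * awPoly z n * gcPoly (x + n * z) (M - n), fun y => ?_⟩
  rw [Polynomial.eval_finset_sum]
  simp only [Wsum]
  apply Finset.sum_congr rfl
  intro n _
  simp only [Polynomial.eval_mul, Polynomial.eval_C, awPoly_eval, gcPoly_eval]
  rw [show y + (x + n * z) = x + y + n * z by ring]

lemma poly_periodic (p : Polynomial ℝ) (h : ∀ t : ℝ, p.eval (t + 1) = p.eval t) (t : ℝ) :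
    p.eval t = p.eval 0 := by
  have hn : ∀ n : ℕ, p.eval (n : ℝ) = p.eval 0 := by
    intro n
    induction n with
    | zero => norm_num
    | succ k ih => push_cast; rw [h (k : ℝ), ih]
  set q := p - Polynomial.C (p.eval 0) with hq
  have hq0 : q = 0 := by
    apply Polynomial.eq_zero_of_infinite_isRoot
    apply Set.infinite_of_injective_forall_mem (f := fun n : ℕ => (n : ℝ)) Nat.cast_injective
    intro a
    simp only [Set.mem_setOf_eq, Polynomial.IsRoot, hq, Polynomial.eval_sub,
      Polynomial.eval_C, hn a, sub_self]
  have := congrArg (Polynomial.eval t) hq0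
  simp only [hq, Polynomial.eval_sub, Polynomial.eval_C, Polynomial.eval_zero] at this
  linarith

lemma Wsum_zero (z x y : ℝ) : Wsum z x y 0 = 1 := by
  simp [Wsum, aw_zero, gchoose_zero]

/-- Telescoping step: `Wsum` at level `M+1` is 1-periodic in `y` if level `M` is constant. -/
lemma Wsum_succ_periodic (z x : ℝ) (M : ℕ)
    (ih : ∀ y' : ℝ, Wsum z x y' M = gchoose x M) (y : ℝ) :
    Wsum z x (y + 1) (M + 1) = Wsum z x y (M + 1) := by
  have key : Wsum z x (y + 1) (M + 1) - Wsum z x y (M + 1)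
      = -Wsum z x (y + z + 1) M + Wsum z x y M := by
    simp only [Wsum]
    rw [← Finset.sum_sub_distrib]
    have split : ∀ n ∈ Finset.range (M + 1 + 1),
        (-1 : ℝ) ^ n * aw z (y + 1) n * gchoose (x + (y + 1) + n * z) (M + 1 - n)
          - (-1 : ℝ) ^ n * aw z y n * gchoose (x + y + n * z) (M + 1 - n)
        = (-1 : ℝ) ^ n * (aw z (y + 1) n - aw z y n)
              * gchoose (x + (y + 1) + n * z) (M + 1 - n)
          + (-1 : ℝ) ^ n * aw z y n
            * (gchoose (x + (y + 1) + n * z) (M + 1 - n)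
                - gchoose (x + y + n * z) (M + 1 - n)) := by
      intro n _; ring
    rw [Finset.sum_congr rfl split, Finset.sum_add_distrib]
    congr 1
    · -- first sum equals `-Wsum z x (y+z+1) M`
      rw [Finset.sum_range_succ']
      have h0 : (-1 : ℝ) ^ 0 * (aw z (y + 1) 0 - aw z y 0)
          * gchoose (x + (y + 1) + ((0 : ℕ) : ℝ) * z) (M + 1 - 0) = 0 := by
        rw [aw_zero, aw_zero]; ring
      rw [h0, add_zero, ← Finset.sum_neg_distrib]
      refine Finset.sum_congr rfl fun n hn => ?_
      rw [aw_step]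
      have hidx : M + 1 - (n + 1) = M - n := by omega
      have harg : x + (y + 1) + (((n + 1 : ℕ)) : ℝ) * z = x + (y + z + 1) + (n : ℝ) * z := by
        push_cast; ring
      rw [hidx, harg]
      ring
    · -- second sum equals `Wsum z x y M`
      rw [Finset.sum_range_succ]
      have hlast : (-1 : ℝ) ^ (M + 1) * aw z y (M + 1)
          * (gchoose (x + (y + 1) + (((M + 1 : ℕ)) : ℝ) * z) (M + 1 - (M + 1))
              - gchoose (x + y + (((M + 1 : ℕ)) : ℝ) * z) (M + 1 - (M + 1))) = 0 := by
        rw [Nat.sub_self, gchoose_zero, gchoose_zero]; ring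
      rw [hlast, add_zero]
      refine Finset.sum_congr rfl fun n hn => ?_
      have hn' : n ≤ M := Nat.lt_succ_iff.mp (Finset.mem_range.mp hn)
      have hidx : M + 1 - n = (M - n) + 1 := by omega
      have harg : x + (y + 1) + (n : ℝ) * z = (x + y + (n : ℝ) * z) + 1 := by ring
      rw [hidx, harg, gchoose_pascal_sub]
  have h1 := ih (y + z + 1)
  have h2 := ih y
  have h3 : Wsum z x (y + 1) (M + 1) - Wsum z x y (M + 1) = 0 := by
    rw [key, h1, h2]; ring
  linarith

lemma Wsum_eq (z : ℝ) : ∀ (M : ℕ) (x y : ℝ), Wsum z x y M = gchoose x M := by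
  intro M
  induction M with
  | zero => intro x y; rw [Wsum_zero, gchoose_zero]
  | succ M ih =>
    intro x y
    obtain ⟨p, hp⟩ := Wsum_poly z x (M + 1)
    have hper : ∀ t : ℝ, p.eval (t + 1) = p.eval t := by
      intro t
      rw [hp, hp]
      exact Wsum_succ_periodic z x M (fun y' => ih x y') t
    have hconst : Wsum z x y (M + 1) = Wsum z x 0 (M + 1) := by
      rw [← hp, ← hp]; exact poly_periodic p hper y
    rw [hconst]
    simp only [Wsum]
    rw [Finset.sum_range_succ']
    have hz : ∀ n ∈ Finset.range (M + 1),
        (-1 : ℝ) ^ (n + 1) * aw z 0 (n + 1)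
          * gchoose (x + 0 + (((n + 1 : ℕ)) : ℝ) * z) (M + 1 - (n + 1)) = 0 := by
      intro n _; rw [aw_zero_left]; ring
    rw [Finset.sum_congr rfl hz, Finset.sum_const_zero, zero_add]
    norm_num [aw_zero]

lemma Ssum_eq (z x : ℝ) : ∀ (M : ℕ) (y : ℝ),
    Ssum z x y M = ∑ n ∈ Finset.range (M + 1), (-(z + 1)) ^ n * gchoose x (M - n) := by
  intro M
  induction M with
  | zero =>
    intro y
    simp [Ssum, gchoose_zero]
  | succ M ih =>
    intro y
    have hsplit : Ssum z x y (M + 1) - Wsum z x y (M + 1)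
        = -(z + 1) * Ssum z x (y + z) M := by
      simp only [Ssum, Wsum]
      rw [← Finset.sum_sub_distrib]
      have split : ∀ n ∈ Finset.range (M + 1 + 1),
          (-1 : ℝ) ^ n * gchoose (y + n * (z + 1)) n * gchoose (x + y + n * z) (M + 1 - n)
            - (-1 : ℝ) ^ n * aw z y n * gchoose (x + y + n * z) (M + 1 - n)
          = (-1 : ℝ) ^ n * (gchoose (y + n * (z + 1)) n - aw z y n)
              * gchoose (x + y + n * z) (M + 1 - n) := by
        intro n _; ring
      rw [Finset.sum_congr rfl split, Finset.sum_range_succ']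
      have h0 : (-1 : ℝ) ^ 0 * (gchoose (y + ((0 : ℕ) : ℝ) * (z + 1)) 0 - aw z y 0)
          * gchoose (x + y + ((0 : ℕ) : ℝ) * z) (M + 1 - 0) = 0 := by
        rw [gchoose_zero, aw_zero]; ring
      rw [h0, add_zero]
      rw [Finset.mul_sum]
      refine Finset.sum_congr rfl fun n hn => ?_
      have hu : gchoose (y + (((n + 1 : ℕ)) : ℝ) * (z + 1)) (n + 1) - aw z y (n + 1)
          = (z + 1) * gchoose ((y + z) + (n : ℝ) * (z + 1)) n := by
        have h := gchoose_split z y n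
        push_cast
        linarith
      have harg : x + y + (((n + 1 : ℕ)) : ℝ) * z = x + (y + z) + (n : ℝ) * z := by
        push_cast; ring
      have hidx : M + 1 - (n + 1) = M - n := by omega
      rw [hu, harg, hidx]
      ring
    have hW := Wsum_eq z (M + 1) x y
    have hS : Ssum z x y (M + 1) = gchoose x (M + 1) - (z + 1) * Ssum z x (y + z) M := by
      rw [← hW]; linarith [hsplit]
    rw [hS, ih (y + z)]
    conv_rhs => rw [Finset.sum_range_succ']
    have hterm : ∀ n ∈ Finset.range (M + 1),
        (-(z + 1)) ^ (n + 1) * gchoose x (M + 1 - (n + 1))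
          = -(z + 1) * ((-(z + 1)) ^ n * gchoose x (M - n)) := by
      intro n _
      have hidx : M + 1 - (n + 1) = M - n := by omega
      rw [hidx]; ring
    rw [Finset.sum_congr rfl hterm, ← Finset.mul_sum]
    simp only [pow_zero, one_mul, Nat.sub_zero]
    ring

theorem coeff_binom_div_linear (m : ℕ) (x z : ℝ) : ∀ y : ℝ,
    PowerSeries.coeff m
        (binomSeries x * (1 + PowerSeries.C (z + 1) * PowerSeries.X)⁻¹) =
      ∑ n ∈ Finset.range (m + 1),
        (-1 : ℝ) ^ n * gchoose (y + n * (z + 1)) n * gchoose (x + y + n * z) (m - n) := by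
  intro y
  have hc : constantCoeff (1 + PowerSeries.C (z + 1) * PowerSeries.X) ≠ 0 := by
    simp
  have hinv : (1 + PowerSeries.C (z + 1) * PowerSeries.X)⁻¹
      = PowerSeries.mk (fun k => (-(z + 1)) ^ k) := by
    rw [PowerSeries.inv_eq_iff_mul_eq_one hc]
    ext n
    rw [mul_add, mul_one]
    rw [show PowerSeries.mk (fun k => (-(z + 1)) ^ k) * (PowerSeries.C (z + 1) * PowerSeries.X)
        = (PowerSeries.mk (fun k => (-(z + 1)) ^ k) * PowerSeries.C (z + 1))
          * PowerSeries.X by ring]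
    cases n with
    | zero =>
      simp
    | succ n =>
      rw [map_add, PowerSeries.coeff_succ_mul_X, PowerSeries.coeff_mul_C,
        PowerSeries.coeff_mk, PowerSeries.coeff_mk, PowerSeries.coeff_one]
      simp only [Nat.succ_ne_zero, if_false]
      rw [pow_succ]
      ring
  rw [hinv, PowerSeries.coeff_mul, Finset.Nat.sum_antidiagonal_eq_sum_range_succ_mk]
  simp only [binomSeries, PowerSeries.coeff_mk]
  have hLHS : ∑ i ∈ Finset.range (m + 1), gchoose x i * (-(z + 1)) ^ (m - i)
      = ∑ n ∈ Finset.range (m + 1), (-(z + 1)) ^ n * gchoose x (m - n) := by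
    rw [← Finset.sum_range_reflect (fun i => gchoose x i * (-(z + 1)) ^ (m - i)) (m + 1)]
    refine Finset.sum_congr rfl fun j hj => ?_
    have hj' : j ≤ m := Nat.lt_succ_iff.mp (Finset.mem_range.mp hj)
    have h1 : m + 1 - 1 - j = m - j := by omega
    have h2 : m - (m - j) = j := by omega
    rw [h1, h2]
    ring
  rw [hLHS, ← Ssum_eq z x m y]
  rfl
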